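/- (Triangular network, reduced fixed point system.) Let φ_1, φ_2, φ_3: [0,∞) → (0,∞) be continuous and strictly decreasing and let α_1, α_2, α_3 > 0. Then the system of equations y_j = α_{j−1} · φ_j( y_{j−1} + 2 y_j + y_{j+1} ), for j ∈ {1,2,3} with indices taken modulo 3 (so that index 0 means 3 and index 4 means 1), has exactly one solution (y_1, y_2, y_3) ∈ [0,∞)^3, and each y_j is strictly positive. -/

import Mathlib

open Filter Set

theorem stmt12 (φ : Fin 3 → ℝ → ℝ) (α : Fin 3 → ℝ) (hα : ∀ j, 0 < α j)
    (hφpos : ∀ j x, 0 ≤ x → 0 < φ j x)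
    (hφcont : ∀ j, ContinuousOn (φ j) (Set.Ici 0))
    (hφanti : ∀ j, StrictAntiOn (φ j) (Set.Ici 0)) :
    (∃! y : Fin 3 → ℝ, (∀ j, 0 ≤ y j) ∧
      ∀ j : Fin 3, y j = α (j - 1) * φ j (y (j - 1) + 2 * y j + y (j + 1))) ∧
    ∀ y : Fin 3 → ℝ, (∀ j, 0 ≤ y j) →
      (∀ j : Fin 3, y j = α (j - 1) * φ j (y (j - 1) + 2 * y j + y (j + 1))) →
      ∀ j, 0 < y j := by
  -- abbreviations
  set c : Fin 3 → ℝ := fun j => α (j - 1) with hc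
  have hcpos : ∀ j, 0 < c j := fun j => hα _
  -- the auxiliary strictly monotone function g j
  set g : Fin 3 → ℝ → ℝ := fun j u => u - c j * φ j (max u 0) with hg
  have hgcont : ∀ j, Continuous (g j) := by
    intro j
    exact continuous_id.sub (continuous_const.mul
      ((hφcont j).comp_continuous (continuous_id.max continuous_const)
        (fun x => Set.mem_Ici.mpr (le_max_right _ _))))
  have hglt : ∀ j u, g j u < u := by
    intro j u
    have := hφpos j (max u 0) (le_max_right _ _)
    have := mul_pos (hcpos j) this
    simp only [hg]
    linarith
  have hgmono : ∀ j, StrictMono (g j) := by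
    intro j u v huv
    have h1 : φ j (max v 0) ≤ φ j (max u 0) := by
      rcases eq_or_lt_of_le (max_le_max huv.le (le_refl (0:ℝ))) with h | h
      · rw [h]
      · exact ((hφanti j) (Set.mem_Ici.mpr (le_max_right _ _)) (Set.mem_Ici.mpr (le_max_right _ _)) h).le
    have h2 : c j * φ j (max v 0) ≤ c j * φ j (max u 0) :=
      mul_le_mul_of_nonneg_left h1 (hcpos j).le
    simp only [hg]; linarith
  have hgsurj : ∀ j, Function.Surjective (g j) := by
    intro j
    refine (hgcont j).surjective ?_ ?_
    · -- tendsto atTop : g j u ≥ u - c j * φ j 0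
      refine tendsto_atTop_mono (f := fun u => u - c j * φ j 0) ?_ ?_
      · intro u
        have h1 : φ j (max u 0) ≤ φ j 0 := by
          rcases (le_max_right u 0).eq_or_lt with h | h
          · rw [← h]
          · exact ((hφanti j) (Set.mem_Ici.mpr le_rfl) (Set.mem_Ici.mpr (le_max_right _ _)) h).le
        have := mul_le_mul_of_nonneg_left h1 (hcpos j).le
        simp only [hg]; linarith
      · exact tendsto_atTop_add_const_right _ _ tendsto_id
    · exact tendsto_atBot_mono (fun u => (hglt j u).le) tendsto_id
  -- the inverse functions
  set e : Fin 3 → (ℝ ≃o ℝ) :=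
    fun j => StrictMono.orderIsoOfSurjective (g j) (hgmono j) (hgsurj j) with he
  set U : Fin 3 → ℝ → ℝ := fun j s => (e j).symm s with hUdef
  have hgU : ∀ j s, g j (U j s) = s := by
    intro j s
    have : g j ((e j).symm s) = (e j) ((e j).symm s) := by
      rw [StrictMono.coe_orderIsoOfSurjective]
    simp only [hUdef]
    rw [this, OrderIso.apply_symm_apply]
  have hUcont : ∀ j, Continuous (U j) := fun j => (e j).symm.continuous
  have hUgt : ∀ j s, s < U j s := fun j s => by
    have := hglt j (U j s); rw [hgU] at this; exact this
  have hUeq : ∀ j s, 0 ≤ s → U j s = s + c j * φ j (U j s) := by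
    intro j s hs
    have h0 : 0 ≤ U j s := le_trans hs (hUgt j s).le
    have := hgU j s
    simp only [hg, max_eq_left h0] at this
    linarith
  have hUmono : ∀ j, StrictMono (U j) := fun j => (e j).symm.strictMono
  -- key contraction-type estimate
  have hUdiff : ∀ j s t, 0 ≤ s → s < t → U j t - U j s < t - s := by
    intro j s t hs hst
    have hUs := hUeq j s hs
    have hUt := hUeq j t (hs.trans hst.le)
    have hUlt : U j s < U j t := hUmono j hst
    have h0s : 0 ≤ U j s := le_trans hs (hUgt j s).le
    have hφlt : φ j (U j t) < φ j (U j s) :=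
      (hφanti j) h0s (h0s.trans hUlt.le) hUlt
    have := mul_lt_mul_of_pos_left hφlt (hcpos j)
    linarith
  -- the function F
  set F : ℝ → ℝ := fun s => U 0 s + U 1 s + U 2 s - 4 * s with hF
  have hFcont : Continuous F := by
    exact (((hUcont 0).add (hUcont 1)).add (hUcont 2)).sub
      (continuous_const.mul continuous_id)
  have hFanti : ∀ s t, 0 ≤ s → s < t → F t < F s := by
    intro s t hs hst
    have h0 := hUdiff 0 s t hs hst
    have h1 := hUdiff 1 s t hs hst
    have h2 := hUdiff 2 s t hs hst
    simp only [hF]; linarith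
  -- characterization of solutions
  have hsumidx : ∀ (y : Fin 3 → ℝ) (j : Fin 3),
      y (j - 1) + 2 * y j + y (j + 1) = (y 0 + y 1 + y 2) + y j := by
    intro y j
    fin_cases j
    · show y 2 + 2 * y 0 + y 1 = y 0 + y 1 + y 2 + y 0; ring
    · show y 0 + 2 * y 1 + y 2 = y 0 + y 1 + y 2 + y 1; ring
    · show y 1 + 2 * y 2 + y 0 = y 0 + y 1 + y 2 + y 2; ring
  have hchar : ∀ y : Fin 3 → ℝ, (∀ j, 0 ≤ y j) →
      (∀ j : Fin 3, y j = α (j - 1) * φ j (y (j - 1) + 2 * y j + y (j + 1))) →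
      (∀ j, y j = U j (y 0 + y 1 + y 2) - (y 0 + y 1 + y 2)) ∧
        F (y 0 + y 1 + y 2) = 0 := by
    intro y hy heq
    set s : ℝ := y 0 + y 1 + y 2 with hs
    have hs0 : 0 ≤ s := by have := hy 0; have := hy 1; have := hy 2; positivity
    have key : ∀ j, U j s = s + y j := by
      intro j
      have h1 : y j = c j * φ j (s + y j) := by
        have := heq j
        rw [hsumidx y j, ← hs] at this
        rwa [show α (j - 1) = c j from rfl] at this
      have h2 : g j (s + y j) = s := by
        have hnn : (0:ℝ) ≤ s + y j := add_nonneg hs0 (hy j)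
        simp only [hg, max_eq_left hnn]
        linarith
      have := hgU j s
      exact (hgmono j).injective (by rw [this, h2])
    constructor
    · intro j; rw [key j]; ring
    · simp only [hF, key 0, key 1, key 2]; linarith
  -- existence via IVT
  obtain ⟨y, hy⟩ : ∃ y : Fin 3 → ℝ, (∀ j, 0 ≤ y j) ∧
      ∀ j : Fin 3, y j = α (j - 1) * φ j (y (j - 1) + 2 * y j + y (j + 1)) := by
    set S : ℝ := c 0 * φ 0 0 + c 1 * φ 1 0 + c 2 * φ 2 0 with hS
    have hSj : ∀ j, 0 < c j * φ j 0 := fun j => mul_pos (hcpos j) (hφpos j 0 le_rfl)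
    have hSpos : 0 < S := by have := hSj 0; have := hSj 1; have := hSj 2; positivity
    have hF0 : 0 < F 0 := by
      have h0 := hUgt 0 0; have h1 := hUgt 1 0; have h2 := hUgt 2 0
      simp only [hF]; linarith
    have hFS : F S < 0 := by
      have hb : ∀ j, U j S < S + c j * φ j 0 := by
        intro j
        have h1 := hUeq j S hSpos.le
        have h2 : φ j (U j S) < φ j 0 :=
          (hφanti j) (Set.mem_Ici.mpr le_rfl) (Set.mem_Ici.mpr (hSpos.le.trans (hUgt j S).le)) (hSpos.trans (hUgt j S))
        have := mul_lt_mul_of_pos_left h2 (hcpos j)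
        linarith
      have := hb 0; have := hb 1; have := hb 2
      simp only [hF]; linarith
    have : (0:ℝ) ∈ Set.Icc (F S) (F 0) := ⟨hFS.le, hF0.le⟩
    have hsub := intermediate_value_Icc' hSpos.le hFcont.continuousOn
    obtain ⟨s, hsmem, hFs⟩ := hsub this
    refine ⟨fun j => U j s - s, fun j => ?_, fun j => ?_⟩
    · have := hUgt j s; beta_reduce; linarith
    · beta_reduce
      have hsum : (U 0 s - s) + (U 1 s - s) + (U 2 s - s) = s := by
        simp only [hF] at hFs; linarith
      have harg := hsumidx (fun j => U j s - s) j
      rw [harg, hsum, show α (j - 1) = c j from rfl,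
        show s + (U j s - s) = U j s from by ring]
      have h := hUeq j s hsmem.1
      linarith
  refine ⟨⟨y, hy, ?_⟩, ?_⟩
  · -- uniqueness
    intro z hz
    obtain ⟨hkz, hFz⟩ := hchar z hz.1 hz.2
    obtain ⟨hky, hFy⟩ := hchar y hy.1 hy.2
    have hz0 : 0 ≤ z 0 + z 1 + z 2 := by
      have := hz.1 0; have := hz.1 1; have := hz.1 2; positivity
    have hy0 : 0 ≤ y 0 + y 1 + y 2 := by
      have := hy.1 0; have := hy.1 1; have := hy.1 2; positivity
    have hseq : z 0 + z 1 + z 2 = y 0 + y 1 + y 2 := by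
      by_contra h
      rcases lt_or_gt_of_ne h with h | h
      · have := hFanti _ _ hz0 h; rw [hFz, hFy] at this; linarith
      · have := hFanti _ _ hy0 h; rw [hFz, hFy] at this; linarith
    funext j
    rw [hkz j, hky j, hseq]
  · -- positivity
    intro z hz heq j
    have harg : 0 ≤ z (j - 1) + 2 * z j + z (j + 1) := by
      have := hz (j - 1); have := hz j; have := hz (j + 1); linarith
    rw [heq j]
    exact mul_pos (hα _) (hφpos j _ harg)
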